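/- Let $h : \mathbb{R}^d \to \mathbb{R}$ be differentiable and convex, let $\rho$ be a finite measure on $\mathbb{R}^d$ with finite first moment and $X = \int x\,d\rho(x)$, and define the cost $c_0 = h(X) - X\cdot\nabla h(X)$, $c_n(x_1,\dots,x_n) = h(\sum_{j=1}^n x_j)$ for $n \ge 1$. Then for every grand-canonical probability $\mathbb{P} = (\mathbb{P}_n)$ with density $\rho$, the total cost satisfies $\mathbb{P}(\mathbf{c}) := c_0\mathbb{P}_0 + \sum_{n\ge1}\int c_n\,d\mathbb{P}_n \ge h(X)$, with equality if and only if $\sum_{j=1}^n x_j = X$ holds $\mathbb{P}_n$-almost everywhere for all $n \ge 1$, provided $h$ is strictly convex. -/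

import Mathlib

set_option maxHeartbeats 1000000

open MeasureTheory ENNReal
open scoped RealInnerProductSpace

lemma grad_ineq {F : Type*} [NormedAddCommGroup F] [InnerProductSpace ℝ F] [CompleteSpace F]
    {h : F → ℝ} (hconv : ConvexOn ℝ Set.univ h) (hdiff : Differentiable ℝ h) (x y : F) :
    h x + ⟪y - x, gradient h x⟫ ≤ h y := by
  have hgrad : ∀ v : F, (fderiv ℝ h x) v = ⟪gradient h x, v⟫ := by
    intro v
    rw [gradient, InnerProductSpace.toDual_symm_apply]
  set φ : ℝ → ℝ := fun t => h (x + t • (y - x)) with hφdef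
  have hc : ∀ t : ℝ, HasDerivAt (fun t : ℝ => x + t • (y - x)) (y - x) t := fun t =>
    by simpa using ((hasDerivAt_id t).smul_const (y - x)).const_add x
  have hder : ∀ t : ℝ, HasDerivAt φ ((fderiv ℝ h (x + t • (y - x))) (y - x)) t := by
    intro t
    exact ((hdiff (x + t • (y - x))).hasFDerivAt.comp_hasDerivAt t (hc t))
  have hφconv : ConvexOn ℝ Set.univ φ := by
    have := hconv.comp_affineMap (AffineMap.lineMap x y : ℝ →ᵃ[ℝ] F)
    have he : φ = h ∘ (AffineMap.lineMap x y : ℝ →ᵃ[ℝ] F) := by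
      funext t
      simp [hφdef, AffineMap.lineMap_apply_module]
      ring_nf
      congr 1
      module
    rw [he]
    simpa using this
  have h01 : deriv φ 0 ≤ slope φ 0 1 :=
    hφconv.deriv_le_slope (Set.mem_univ 0) (Set.mem_univ 1) one_pos (hder 0).differentiableAt
  rw [(hder 0).deriv] at h01
  have hs : slope φ 0 1 = φ 1 - φ 0 := by simp [slope_def_field]
  have h0 : φ 0 = h x := by simp [hφdef]
  have h1 : φ 1 = h y := by simp [hφdef]
  rw [hs, h0, h1] at h01
  have : (fderiv ℝ h (x + (0:ℝ) • (y - x))) (y - x) = ⟪y - x, gradient h x⟫ := by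
    simp only [zero_smul, add_zero]
    rw [hgrad (y - x), real_inner_comm]
  rw [this] at h01
  linarith

lemma grad_strict {F : Type*} [NormedAddCommGroup F] [InnerProductSpace ℝ F] [CompleteSpace F]
    {h : F → ℝ} (hconv : ConvexOn ℝ Set.univ h) (hdiff : Differentiable ℝ h)
    (hsc : StrictConvexOn ℝ Set.univ h) (x y : F) (hxy : y ≠ x) :
    h x + ⟪y - x, gradient h x⟫ < h y := by
  set m : F := (1/2 : ℝ) • x + (1/2 : ℝ) • y with hm
  have hlt : h m < (1/2 : ℝ) * h x + (1/2 : ℝ) * h y :=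
    hsc.2 (Set.mem_univ x) (Set.mem_univ y) (Ne.symm hxy) (by norm_num) (by norm_num) (by norm_num)
  have hsub : m - x = (1/2 : ℝ) • (y - x) := by
    rw [hm]; module
  have hle : h x + (1/2 : ℝ) * ⟪y - x, gradient h x⟫ ≤ h m := by
    have := grad_ineq hconv hdiff x m
    rwa [hsub, real_inner_smul_left] at this
  linarith

/-- A grand-canonical probability with density `ρ`. -/
def IsGC {Ω : Type*} [MeasurableSpace Ω] (P : ∀ n : ℕ, Measure (Fin n → Ω))
    (ρ : Measure Ω) : Prop :=
  (∀ n, IsFiniteMeasure (P n)) ∧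
  (∑' n, P n Set.univ) = 1 ∧
  (∀ (n : ℕ) (σ : Equiv.Perm (Fin n)), (P n).map (fun v => v ∘ σ) = P n) ∧
  (∀ B : Set Ω, MeasurableSet B →
    (∑' (n : ℕ), ((n : ℝ≥0∞) + 1) * P (n + 1) {v | v 0 ∈ B}) = ρ B)

theorem stmt16 (d : ℕ) (h : EuclideanSpace ℝ (Fin d) → ℝ)
    (hconv : ConvexOn ℝ Set.univ h) (hdiff : Differentiable ℝ h)
    (ρ : Measure (EuclideanSpace ℝ (Fin d))) [IsFiniteMeasure ρ]
    (hmom : Integrable (fun x : EuclideanSpace ℝ (Fin d) => x) ρ)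
    (P : ∀ n : ℕ, Measure (Fin n → EuclideanSpace ℝ (Fin d))) (hP : IsGC P ρ)
    (X : EuclideanSpace ℝ (Fin d)) (hX : X = ∫ x, x ∂ρ)
    (hint : ∀ n : ℕ,
      Integrable (fun v : Fin (n + 1) → EuclideanSpace ℝ (Fin d) => h (∑ j, v j))
        (P (n + 1)))
    (hsum : Summable fun n : ℕ =>
      ∫ v : Fin (n + 1) → EuclideanSpace ℝ (Fin d), h (∑ j, v j) ∂(P (n + 1))) :
    (h X ≤ (h X - (inner ℝ X (gradient h X) : ℝ)) * (P 0 Set.univ).toReal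
        + ∑' n : ℕ,
            ∫ v : Fin (n + 1) → EuclideanSpace ℝ (Fin d), h (∑ j, v j) ∂(P (n + 1))) ∧
    (StrictConvexOn ℝ Set.univ h →
      ((h X - (inner ℝ X (gradient h X) : ℝ)) * (P 0 Set.univ).toReal
          + (∑' n : ℕ,
              ∫ v : Fin (n + 1) → EuclideanSpace ℝ (Fin d), h (∑ j, v j) ∂(P (n + 1)))
          = h X ↔
        ∀ n : ℕ, P (n + 1) {v : Fin (n + 1) → EuclideanSpace ℝ (Fin d)
          | (∑ j, v j) ≠ X} = 0)) := by
  classical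
  obtain ⟨hfin, hnorm, hsymm, hdens⟩ := hP
  haveI : ∀ n, IsFiniteMeasure (P n) := hfin
  set G : EuclideanSpace ℝ (Fin d) := gradient h X with hGdef
  -- the marginal measures
  set μ : ℕ → Measure (EuclideanSpace ℝ (Fin d)) :=
    fun n => (P (n+1)).map (fun v => v 0) with hμdef
  have hρ : ρ = Measure.sum (fun n : ℕ => ((n : ℝ≥0∞) + 1) • μ n) := by
    ext B hB
    rw [Measure.sum_apply _ hB]
    have : ∀ n : ℕ, (((n : ℝ≥0∞) + 1) • μ n) B = ((n : ℝ≥0∞) + 1) * P (n+1) {v | v 0 ∈ B} := by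
      intro n
      rw [Measure.smul_apply, smul_eq_mul, hμdef, Measure.map_apply (measurable_pi_apply 0) hB]
      rfl
    rw [tsum_congr this]
    exact (hdens B hB).symm
  have hmom' : Integrable (fun x : EuclideanSpace ℝ (Fin d) => x)
      (Measure.sum (fun n : ℕ => ((n : ℝ≥0∞) + 1) • μ n)) := hρ ▸ hmom
  have hμint : ∀ n, Integrable (fun x : EuclideanSpace ℝ (Fin d) => x) (μ n) := by
    intro n
    have h1 : Integrable (fun x : EuclideanSpace ℝ (Fin d) => x) (((n : ℝ≥0∞) + 1) • μ n) :=
      hmom'.mono_measure (Measure.le_sum _ n)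
    refine h1.mono_measure ?_
    rw [Measure.le_iff]
    intro s _
    rw [Measure.smul_apply, smul_eq_mul]
    exact le_mul_of_one_le_left zero_le le_add_self
  have hcoord0 : ∀ n : ℕ, Integrable (fun v : Fin (n+1) → EuclideanSpace ℝ (Fin d) => v 0)
      (P (n+1)) := by
    intro n
    exact (integrable_map_measure aestronglyMeasurable_id
      (measurable_pi_apply 0).aemeasurable).mp (hμint n)
  have hμval : ∀ n : ℕ, ∫ x, x ∂(μ n) = ∫ v, v 0 ∂(P (n+1)) := by
    intro n
    exact integral_map (measurable_pi_apply 0).aemeasurable aestronglyMeasurable_id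
  have hcoord : ∀ (n : ℕ) (j : Fin (n+1)),
      Integrable (fun v : Fin (n+1) → EuclideanSpace ℝ (Fin d) => v j) (P (n+1)) ∧
      ∫ v, v j ∂(P (n+1)) = ∫ x, x ∂(μ n) := by
    intro n j
    set σ := Equiv.swap (0 : Fin (n+1)) j with hσ
    have hT : Measurable (fun v : Fin (n+1) → EuclideanSpace ℝ (Fin d) => v ∘ σ) :=
      measurable_pi_lambda _ fun i => measurable_pi_apply (σ i)
    have hmap := hsymm (n+1) σ
    have hcomp : (fun v : Fin (n+1) → EuclideanSpace ℝ (Fin d) => (v ∘ σ) j)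
        = fun v => v 0 := by
      funext v
      simp [hσ, Equiv.swap_apply_right]
    constructor
    · rw [← hmap]
      refine (integrable_map_measure (measurable_pi_apply j).aestronglyMeasurable
        hT.aemeasurable).mpr ?_
      show Integrable (fun v : Fin (n+1) → EuclideanSpace ℝ (Fin d) => (v ∘ σ) j) (P (n+1))
      rw [hcomp]
      exact hcoord0 n
    · conv_lhs => rw [← hmap]
      rw [integral_map hT.aemeasurable]
      · rw [hμval n]
        show ∫ v, (v ∘ σ) j ∂(P (n+1)) = _
        rw [hcomp]
      · rw [hmap]
        exact (measurable_pi_apply j).aestronglyMeasurable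
  have hSint : ∀ n, Integrable (fun v : Fin (n+1) → EuclideanSpace ℝ (Fin d) => ∑ j, v j)
      (P (n+1)) := fun n => integrable_finset_sum _ fun j _ => (hcoord n j).1
  have hSval : ∀ n, ∫ v, (∑ j, v j) ∂(P (n+1)) = ((n : ℝ) + 1) • ∫ x, x ∂(μ n) := by
    intro n
    rw [integral_finset_sum _ (fun j _ => (hcoord n j).1)]
    rw [Finset.sum_congr rfl fun j _ => (hcoord n j).2, Finset.sum_const, Finset.card_univ,
      Fintype.card_fin]
    rw [← Nat.cast_smul_eq_nsmul ℝ]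
    push_cast
    ring_nf
  -- the vector HasSum
  have hVX : HasSum (fun n => ∫ v, (∑ j, v j) ∂(P (n+1))) X := by
    have h1 : HasSum (fun n : ℕ => ∫ x, x ∂(((n : ℝ≥0∞) + 1) • μ n)) X := by
      rw [hX, hρ]
      exact hasSum_integral_measure hmom'
    have he : (fun n : ℕ => ∫ v, (∑ j, v j) ∂(P (n+1)))
        = fun n : ℕ => ∫ x, x ∂(((n : ℝ≥0∞) + 1) • μ n) := by
      funext n
      rw [integral_smul_measure, hSval n]
      congr 1
    rw [he]
    exact h1
  -- masses
  have hpt : ∀ n, P n Set.univ ≠ ⊤ := fun n => measure_ne_top _ _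
  have hpsum : Summable (fun n => (P n Set.univ).toReal) :=
    ENNReal.summable_toReal (by rw [hnorm]; exact one_ne_top)
  have hpval : ∑' n, (P n Set.univ).toReal = 1 := by
    rw [← ENNReal.tsum_toReal_eq hpt, hnorm, ENNReal.toReal_one]
  have hqsummable : Summable (fun n => (P (n+1) Set.univ).toReal) :=
    (summable_nat_add_iff 1).mpr hpsum
  have hsplit : (P 0 Set.univ).toReal + ∑' n, (P (n+1) Set.univ).toReal = 1 := by
    rw [← Summable.tsum_eq_zero_add hpsum]
    exact hpval
  -- nonnegativity of the linearized remainder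
  have hg0 : ∀ y, 0 ≤ h y - h X - ⟪G, y - X⟫ := by
    intro y
    have h1 := grad_ineq hconv hdiff X y
    have h2 : ⟪G, y - X⟫ = ⟪y - X, gradient h X⟫ := real_inner_comm _ _
    rw [h2]
    linarith
  -- integrability of the remainder
  have hinner_int : ∀ n, Integrable
      (fun v : Fin (n+1) → EuclideanSpace ℝ (Fin d) => ⟪G, (∑ j, v j) - X⟫) (P (n+1)) :=
    fun n => Integrable.const_inner G ((hSint n).sub (integrable_const X))
  set J : ℕ → ℝ := fun n =>
    ∫ v, (h (∑ j, v j) - h X - ⟪G, (∑ j, v j) - X⟫) ∂(P (n+1)) with hJdef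
  have hJint : ∀ n, Integrable
      (fun v : Fin (n+1) → EuclideanSpace ℝ (Fin d) =>
        h (∑ j, v j) - h X - ⟪G, (∑ j, v j) - X⟫) (P (n+1)) :=
    fun n => ((hint n).sub (integrable_const _)).sub (hinner_int n)
  have hJnn : ∀ n, 0 ≤ J n := fun n => integral_nonneg fun v => hg0 _
  have hJval : ∀ n, J n = ((∫ v, h (∑ j, v j) ∂(P (n+1))) - h X * (P (n+1) Set.univ).toReal)
      - ((⟪G, ∫ v, (∑ j, v j) ∂(P (n+1))⟫) - (P (n+1) Set.univ).toReal * ⟪G, X⟫) := by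
    intro n
    have hint2 : Integrable (fun v : Fin (n+1) → EuclideanSpace ℝ (Fin d) =>
        h (∑ j, v j) - h X) (P (n+1)) := (hint n).sub (integrable_const (h X))
    have hsub2 : Integrable (fun v : Fin (n+1) → EuclideanSpace ℝ (Fin d) =>
        (∑ j, v j) - X) (P (n+1)) := (hSint n).sub (integrable_const X)
    have e1 : J n = (∫ v, (h (∑ j, v j) - h X) ∂(P (n+1)))
        - ∫ v, (⟪G, (∑ j, v j) - X⟫ : ℝ) ∂(P (n+1)) := integral_sub hint2 (hinner_int n)
    have e2 : ∫ v, (h (∑ j, v j) - h X) ∂(P (n+1))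
        = (∫ v, h (∑ j, v j) ∂(P (n+1))) - ∫ v, (fun _ => h X) v ∂(P (n+1)) :=
      integral_sub (hint n) (integrable_const (h X))
    have e3 : ∫ v, (⟪G, (∑ j, v j) - X⟫ : ℝ) ∂(P (n+1))
        = ⟪G, ∫ v, ((∑ j, v j) - X) ∂(P (n+1))⟫ := integral_inner hsub2 G
    have e4 : ∫ v, ((∑ j, v j) - X) ∂(P (n+1))
        = (∫ v, (∑ j, v j) ∂(P (n+1))) - ∫ v, (fun _ => X) v ∂(P (n+1)) :=
      integral_sub (hSint n) (integrable_const X)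
    rw [e1, e2, e3, e4, integral_const, integral_const, inner_sub_right, real_inner_smul_right]
    simp only [smul_eq_mul, measureReal_def]
    ring
  -- HasSum for J
  have hWX : HasSum (fun n => (⟪G, ∫ v, (∑ j, v j) ∂(P (n+1))⟫ : ℝ)) ⟪G, X⟫ := by
    have := hVX.mapL (innerSL ℝ G)
    simpa using this
  have hqs : HasSum (fun n => (P (n+1) Set.univ).toReal)
      (∑' n, (P (n+1) Set.univ).toReal) := hqsummable.hasSum
  have hIs : HasSum (fun n => ∫ v, h (∑ j, v j) ∂(P (n+1)))
      (∑' n, ∫ v : Fin (n + 1) → EuclideanSpace ℝ (Fin d), h (∑ j, v j) ∂(P (n + 1))) :=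
    hsum.hasSum
  have hJsum : HasSum J
      ((∑' n, ∫ v : Fin (n + 1) → EuclideanSpace ℝ (Fin d), h (∑ j, v j) ∂(P (n + 1)))
        - h X * (∑' n, (P (n+1) Set.univ).toReal)
        - (⟪G, X⟫ - (∑' n, (P (n+1) Set.univ).toReal) * ⟪G, X⟫)) := by
    have hcomb := (hIs.sub (hqs.mul_left (h X))).sub (hWX.sub (hqs.mul_right ⟪G, X⟫))
    have he : J = fun n => ((∫ v, h (∑ j, v j) ∂(P (n+1)))
        - h X * (P (n+1) Set.univ).toReal)
        - ((⟪G, ∫ v, (∑ j, v j) ∂(P (n+1))⟫) - (P (n+1) Set.univ).toReal * ⟪G, X⟫) :=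
      funext fun n => hJval n
    rw [he]
    exact hcomb
  -- the key identity
  have hGX : (inner ℝ X (gradient h X) : ℝ) = ⟪G, X⟫ := real_inner_comm _ _
  have hkey : (h X - (inner ℝ X (gradient h X) : ℝ)) * (P 0 Set.univ).toReal
      + (∑' n, ∫ v : Fin (n + 1) → EuclideanSpace ℝ (Fin d), h (∑ j, v j) ∂(P (n + 1)))
      = h X + ∑' n, J n := by
    rw [hJsum.tsum_eq, hGX]
    have hp0 : (P 0 Set.univ).toReal = 1 - ∑' n, (P (n+1) Set.univ).toReal := by
      linarith [hsplit]
    rw [hp0]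
    ring
  constructor
  · rw [hkey]
    have : 0 ≤ ∑' n, J n := tsum_nonneg hJnn
    linarith
  · intro hsc
    have hstrict : ∀ y, y ≠ X → 0 < h y - h X - ⟪G, y - X⟫ := by
      intro y hy
      have h1 := grad_strict hconv hdiff hsc X y hy
      have h2 : ⟪G, y - X⟫ = ⟪y - X, gradient h X⟫ := real_inner_comm _ _
      rw [h2]
      linarith
    constructor
    · intro heq
      rw [hkey] at heq
      have hzero : ∑' n, J n = 0 := by linarith
      intro n
      have hJ0 : J n = 0 := by
        have hle := Summable.le_tsum hJsum.summable n (fun j _ => hJnn j)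
        have := hJnn n
        linarith
      have hae := (integral_eq_zero_iff_of_nonneg (fun v => hg0 _) (hJint n)).mp hJ0
      have hX' : ∀ᵐ v ∂(P (n+1)), (∑ j, v j) = X := by
        filter_upwards [hae] with v hv
        by_contra hne
        have := hstrict _ hne
        simp only [Pi.zero_apply] at hv
        linarith [hv.symm.le]
      exact hX'
    · intro hae
      have hJ0 : ∀ n, J n = 0 := by
        intro n
        have h1 : ∀ᵐ v ∂(P (n+1)), (∑ j, v j) = X := hae n
        have h2 : (fun v : Fin (n+1) → EuclideanSpace ℝ (Fin d) =>
            h (∑ j, v j) - h X - ⟪G, (∑ j, v j) - X⟫) =ᵐ[P (n+1)] 0 := by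
          filter_upwards [h1] with v hv
          simp [hv]
        rw [hJdef]
        exact integral_eq_zero_of_ae h2
      rw [hkey]
      have : ∑' n, J n = 0 := by
        simp only [hJ0]
        exact tsum_zero
      linarith
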